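/- Let λ(t, M) = K/(t+c)^p · β e^{-β(M - M₀)} for K, β, c > 0, p, M₀, t ≥ 0, and let π(t, M) = Φ((M - μ(t))/s) with s > 0 and μ : [0,∞) → ℝ measurable. Then for every t ≥ 0, ∫_{-∞}^{∞} λ(t, M) π(t, M) dM = K/(t+c)^p · exp(-β(μ(t) - M₀) + ½β²s²). -/

import Mathlib

open Real MeasureTheory Set

/-- The standard normal cumulative distribution function. -/
noncomputable def stdNormalCDF (z : ℝ) : ℝ :=
  ∫ t in Set.Iic z, (1 / Real.sqrt (2 * π)) * Real.exp (-t ^ 2 / 2)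

noncomputable def npdf (u : ℝ) : ℝ := (1 / Real.sqrt (2 * π)) * Real.exp (-u ^ 2 / 2)

lemma npdf_nonneg (u : ℝ) : 0 ≤ npdf u := by
  unfold npdf
  positivity

lemma npdf_measurable : Measurable npdf := by
  unfold npdf
  fun_prop

lemma integrable_npdf : Integrable npdf := by
  have h : Integrable fun u : ℝ => Real.exp (-(1/2) * u ^ 2) :=
    integrable_exp_neg_mul_sq (by norm_num)
  have := h.const_mul (1 / Real.sqrt (2 * π))
  refine this.congr (Filter.Eventually.of_forall fun u => ?_)
  unfold npdf
  ring_nf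

lemma integrable_exp_mul_npdf (b : ℝ) : Integrable fun u : ℝ => Real.exp (b * u) * npdf u := by
  have h : Integrable fun u : ℝ => Real.exp (-(1/2) * u ^ 2) :=
    integrable_exp_neg_mul_sq (by norm_num)
  have h2 : Integrable fun u : ℝ => Real.exp (-(1/2) * (u - b) ^ 2) := h.comp_sub_right b
  have := (h2.const_mul ((1 / Real.sqrt (2 * π)) * Real.exp (b ^ 2 / 2)))
  refine this.congr (Filter.Eventually.of_forall fun u => ?_)
  unfold npdf
  have h3 : Real.exp (b * u) * Real.exp (-u ^ 2 / 2)
      = Real.exp (b ^ 2 / 2) * Real.exp (-(1/2) * (u - b) ^ 2) := by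
    rw [← Real.exp_add, ← Real.exp_add]; congr 1; ring
  simp only
  linear_combination (1 / Real.sqrt (2 * π)) * h3.symm

lemma integral_exp_mul_npdf (b : ℝ) :
    ∫ u : ℝ, Real.exp (b * u) * npdf u = Real.exp (b ^ 2 / 2) := by
  have key : ∀ u : ℝ, Real.exp (b * u) * npdf u
      = ((1 / Real.sqrt (2 * π)) * Real.exp (b ^ 2 / 2)) * Real.exp (-(1/2) * (u - b) ^ 2) := by
    intro u
    unfold npdf
    have h3 : Real.exp (b * u) * Real.exp (-u ^ 2 / 2)
        = Real.exp (b ^ 2 / 2) * Real.exp (-(1/2) * (u - b) ^ 2) := by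
      rw [← Real.exp_add, ← Real.exp_add]; congr 1; ring
    linear_combination (1 / Real.sqrt (2 * π)) * h3
  simp_rw [key]
  rw [integral_const_mul]
  have h1 : ∫ u : ℝ, Real.exp (-(1/2) * (u - b) ^ 2)
      = ∫ u : ℝ, Real.exp (-(1/2) * u ^ 2) :=
    integral_sub_right_eq_self (fun u => Real.exp (-(1/2) * u ^ 2)) b
  rw [h1, integral_gaussian]
  have hπ : (0:ℝ) < 2 * π := by positivity
  rw [show π / (1/2 : ℝ) = 2 * π by ring]
  field_simp

lemma stdNormalCDF_eq (z : ℝ) : stdNormalCDF z = ∫ t in Set.Iic z, npdf t := rfl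

lemma stdNormalCDF_nonneg (z : ℝ) : 0 ≤ stdNormalCDF z := by
  rw [stdNormalCDF_eq]
  exact setIntegral_nonneg measurableSet_Iic fun t _ => npdf_nonneg t

lemma stdNormalCDF_mono : Monotone stdNormalCDF := by
  intro z₁ z₂ h
  rw [stdNormalCDF_eq, stdNormalCDF_eq]
  refine setIntegral_mono_set integrable_npdf.integrableOn
    (Filter.Eventually.of_forall fun t => npdf_nonneg t) ?_
  exact (Set.Iic_subset_Iic.mpr h).eventuallyLE

lemma stdNormalCDF_measurable : Measurable stdNormalCDF :=
  stdNormalCDF_mono.measurable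

lemma ofReal_stdNormalCDF (z : ℝ) :
    ENNReal.ofReal (stdNormalCDF z) = ∫⁻ u in Set.Iic z, ENNReal.ofReal (npdf u) := by
  rw [stdNormalCDF_eq]
  exact ofReal_integral_eq_lintegral_ofReal integrable_npdf.integrableOn
    (Filter.Eventually.of_forall fun u => npdf_nonneg u)

lemma integrableOn_exp_tail {β : ℝ} (hβ : 0 < β) (a b0 : ℝ) :
    IntegrableOn (fun M => β * Real.exp (-β * (M - a))) (Set.Ici b0) := by
  rw [integrableOn_Ici_iff_integrableOn_Ioi]
  have h := (exp_neg_integrableOn_Ioi b0 hβ).const_mul (β * Real.exp (β * a))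
  refine h.congr (Filter.Eventually.of_forall fun M => ?_)
  show β * Real.exp (β * a) * Real.exp (-β * M) = β * Real.exp (-β * (M - a))
  rw [mul_assoc, ← Real.exp_add]
  congr 2
  ring

lemma integral_exp_tail {β : ℝ} (hβ : 0 < β) (a b0 : ℝ) :
    ∫ M in Set.Ioi b0, β * Real.exp (-β * (M - a)) = Real.exp (-β * (b0 - a)) := by
  have key : ∀ M : ℝ, β * Real.exp (-β * (M - a))
      = (β * Real.exp (β * a)) * Real.exp (-(β * M)) := by
    intro M
    rw [mul_assoc, ← Real.exp_add]
    congr 2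
    ring
  simp_rw [key]
  rw [integral_const_mul, integral_comp_mul_left_Ioi (fun x => Real.exp (-x)) b0 hβ,
    integral_exp_neg_Ioi, smul_eq_mul]
  have h2 : β * Real.exp (β * a) * (β⁻¹ * Real.exp (-(β * b0)))
      = (β * β⁻¹) * (Real.exp (β * a) * Real.exp (-(β * b0))) := by ring
  rw [h2, mul_inv_cancel₀ hβ.ne', one_mul, ← Real.exp_add]
  congr 1
  ring

lemma lintegral_exp_tail {β : ℝ} (hβ : 0 < β) (a b0 : ℝ) :
    ∫⁻ M in Set.Ici b0, ENNReal.ofReal (β * Real.exp (-β * (M - a)))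
      = ENNReal.ofReal (Real.exp (-β * (b0 - a))) := by
  rw [← ofReal_integral_eq_lintegral_ofReal (integrableOn_exp_tail hβ a b0)
    (Filter.Eventually.of_forall fun M => by positivity),
    integral_Ici_eq_integral_Ioi, integral_exp_tail hβ]

lemma key_integral {β s : ℝ} (hβ : 0 < β) (hs : 0 < s) (a m : ℝ) :
    ∫ M : ℝ, β * (Real.exp (-β * (M - a)) * stdNormalCDF ((M - m) / s))
      = Real.exp (-β * (m - a) + β ^ 2 * s ^ 2 / 2) := by
  have hEmeas : Measurable fun M : ℝ => β * Real.exp (-β * (M - a)) := by fun_prop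
  have hΦmeas : Measurable fun M : ℝ => stdNormalCDF ((M - m) / s) :=
    stdNormalCDF_measurable.comp (by fun_prop)
  have hmeas : Measurable fun M : ℝ => β * (Real.exp (-β * (M - a)) * stdNormalCDF ((M - m) / s)) := by
    have := hEmeas.mul hΦmeas
    simpa [mul_assoc, Pi.mul_def] using this
  have hnn : ∀ M : ℝ, 0 ≤ β * (Real.exp (-β * (M - a)) * stdNormalCDF ((M - m) / s)) := fun M =>
    mul_nonneg hβ.le (mul_nonneg (Real.exp_nonneg _) (stdNormalCDF_nonneg _))
  rw [integral_eq_lintegral_of_nonneg_ae (Filter.Eventually.of_forall hnn)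
    hmeas.aestronglyMeasurable]
  have hcond : ∀ M u : ℝ, (u ≤ (M - m) / s) ↔ (m + s * u ≤ M) := by
    intro M u
    rw [le_div_iff₀ hs]
    constructor <;> intro h <;> nlinarith
  have hgmeas : Measurable fun q : ℝ × ℝ =>
      ENNReal.ofReal (β * Real.exp (-β * (q.1 - a))) * ENNReal.ofReal (npdf q.2) := by
    refine Measurable.mul (f := fun q : ℝ × ℝ => ENNReal.ofReal (β * Real.exp (-β * (q.1 - a))))
      (g := fun q : ℝ × ℝ => ENNReal.ofReal (npdf q.2)) ?_ ?_
    · exact (hEmeas.comp measurable_fst).ennreal_ofReal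
    · exact (npdf_measurable.comp measurable_snd).ennreal_ofReal
  have hAmeas : MeasurableSet {q : ℝ × ℝ | q.2 ≤ (q.1 - m) / s} :=
    measurableSet_le measurable_snd ((measurable_fst.sub measurable_const).div_const s)
  have key : (∫⁻ M : ℝ, ENNReal.ofReal
      (β * (Real.exp (-β * (M - a)) * stdNormalCDF ((M - m) / s))))
      = ENNReal.ofReal (Real.exp (-β * (m - a) + β ^ 2 * s ^ 2 / 2)) := by
    calc (∫⁻ M : ℝ, ENNReal.ofReal
        (β * (Real.exp (-β * (M - a)) * stdNormalCDF ((M - m) / s))))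
        = ∫⁻ M : ℝ, ∫⁻ u in Set.Iic ((M - m) / s),
            ENNReal.ofReal (β * Real.exp (-β * (M - a))) * ENNReal.ofReal (npdf u) := by
          refine lintegral_congr fun M => ?_
          rw [← mul_assoc, ENNReal.ofReal_mul (by positivity), ofReal_stdNormalCDF,
            ← lintegral_const_mul _ (npdf_measurable.ennreal_ofReal)]
      _ = ∫⁻ M : ℝ, ∫⁻ u : ℝ, Set.indicator {q : ℝ × ℝ | q.2 ≤ (q.1 - m) / s}
            (fun q => ENNReal.ofReal (β * Real.exp (-β * (q.1 - a))) *
              ENNReal.ofReal (npdf q.2)) (M, u) := by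
          refine lintegral_congr fun M => ?_
          rw [← lintegral_indicator measurableSet_Iic]
          refine lintegral_congr fun u => ?_
          simp only [Set.indicator_apply, Set.mem_Iic, Set.mem_setOf_eq]
      _ = ∫⁻ u : ℝ, ∫⁻ M : ℝ, Set.indicator {q : ℝ × ℝ | q.2 ≤ (q.1 - m) / s}
            (fun q => ENNReal.ofReal (β * Real.exp (-β * (q.1 - a))) *
              ENNReal.ofReal (npdf q.2)) (M, u) := by
          refine lintegral_lintegral_swap ?_
          exact (hgmeas.indicator hAmeas).aemeasurable
      _ = ∫⁻ u : ℝ, ∫⁻ M in Set.Ici (m + s * u),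
            ENNReal.ofReal (β * Real.exp (-β * (M - a))) * ENNReal.ofReal (npdf u) := by
          refine lintegral_congr fun u => ?_
          rw [← lintegral_indicator measurableSet_Ici]
          refine lintegral_congr fun M => ?_
          simp only [Set.indicator_apply, Set.mem_Ici, Set.mem_setOf_eq, hcond]
      _ = ∫⁻ u : ℝ, ENNReal.ofReal (Real.exp (-β * (m + s * u - a))) *
            ENNReal.ofReal (npdf u) := by
          refine lintegral_congr fun u => ?_
          rw [lintegral_mul_const _ (hEmeas.ennreal_ofReal), lintegral_exp_tail hβ]
      _ = ∫⁻ u : ℝ, ENNReal.ofReal (Real.exp (-β * (m + s * u - a)) * npdf u) := by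
          refine lintegral_congr fun u => ?_
          rw [ENNReal.ofReal_mul (Real.exp_nonneg _)]
      _ = ENNReal.ofReal (∫ u : ℝ, Real.exp (-β * (m + s * u - a)) * npdf u) := by
          refine (ofReal_integral_eq_lintegral_ofReal ?_
            (Filter.Eventually.of_forall fun u => mul_nonneg (Real.exp_nonneg _) (npdf_nonneg u))).symm
          have h := (integrable_exp_mul_npdf (-β * s)).const_mul (Real.exp (-β * (m - a)))
          refine h.congr (Filter.Eventually.of_forall fun u => ?_)
          show Real.exp (-β * (m - a)) * (Real.exp (-β * s * u) * npdf u)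
            = Real.exp (-β * (m + s * u - a)) * npdf u
          rw [← mul_assoc, ← Real.exp_add]
          congr 2
          ring
      _ = ENNReal.ofReal (Real.exp (-β * (m - a) + β ^ 2 * s ^ 2 / 2)) := by
          congr 1
          have : ∀ u : ℝ, Real.exp (-β * (m + s * u - a)) * npdf u
              = Real.exp (-β * (m - a)) * (Real.exp (-β * s * u) * npdf u) := by
            intro u
            rw [← mul_assoc, ← Real.exp_add]
            congr 2
            ring
          simp_rw [this]
          rw [integral_const_mul, integral_exp_mul_npdf, ← Real.exp_add]
          congr 1
          ring
  rw [key, ENNReal.toReal_ofReal (Real.exp_nonneg _)]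

/-- The detected-event intensity `ν(t)` (eq. 10): integrating the joint occurrence rate
times the probit detection function over magnitudes. -/
theorem detected_intensity_formula (K β c p M₀ s : ℝ) (μ : ℝ → ℝ)
    (hK : 0 < K) (hβ : 0 < β) (hc : 0 < c) (hp : 0 ≤ p) (hM₀ : 0 ≤ M₀) (hs : 0 < s)
    (hμ : Measurable μ) :
    ∀ t : ℝ, 0 ≤ t →
      (∫ M : ℝ, (K / (t + c) ^ p * (β * Real.exp (-β * (M - M₀)))) *
          stdNormalCDF ((M - μ t) / s))
        = K / (t + c) ^ p * Real.exp (-β * (μ t - M₀) + (1/2) * β ^ 2 * s ^ 2) := by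
  intro t ht
  simp only [mul_assoc]
  rw [integral_const_mul, key_integral hβ hs M₀ (μ t)]
  congr 1
  ring
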